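/- Let q be a real number with 0 < q and q ≠ 1. Define the modified q-Euler numbers 𝓔_{n,q} = [2]_q (1/(1−q))^n ∑_{l=0}^n C(n,l) (−1)^l / (1 + q^l). Then 𝓔_{0,q} = [2]_q/2, and for every integer n ≥ 1 one has ∑_{l=0}^n C(n,l) q^l 𝓔_{l,q} + 𝓔_{n,q} = 0; moreover for n = 0 one has ∑_{l=0}^0 C(0,l) q^l 𝓔_{l,q} + 𝓔_{0,q} = [2]_q. (In umbral notation: (q𝓔+1)^n + 𝓔_{n,q} equals [2]_q if n = 0 and 0 if n ≠ 0.) -/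

import Mathlib

/-- The modified `q`-Euler numbers
`𝓔_{n,q} = [2]_q (1/(1-q))^n ∑_{l=0}^n C(n,l) (-1)^l / (1+q^l)`. -/
noncomputable def modqEulerNumber (q : ℝ) (n : ℕ) : ℝ :=
  (1 + q) * (1 / (1 - q)) ^ n *
    ∑ l ∈ Finset.range (n + 1), (n.choose l : ℝ) * (-1) ^ l / (1 + q ^ l)

lemma modqEulerNumber_zero (q : ℝ) : modqEulerNumber q 0 = (1 + q) / 2 := by
  simp [modqEulerNumber]
  norm_num
  ring

lemma modqEuler_key (q : ℝ) (hq0 : 0 < q) (hq1 : q ≠ 1) (n : ℕ) :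
    (∑ l ∈ Finset.range (n + 1), (n.choose l : ℝ) * q ^ l * modqEulerNumber q l)
      = (1 + q) * (1 / (1 - q)) ^ n *
        ∑ j ∈ Finset.range (n + 1), (n.choose j : ℝ) * (-1) ^ j * q ^ j / (1 + q ^ j) := by
  have hs : (1 : ℝ) - q ≠ 0 := sub_ne_zero_of_ne (Ne.symm hq1)
  have hpos : ∀ j : ℕ, (0 : ℝ) < 1 + q ^ j := fun j => by positivity
  set r : ℝ := q * (1 / (1 - q)) with hr
  have hr1 : r + 1 = 1 / (1 - q) := by
    rw [hr, mul_one_div, div_add_one hs]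
    congr 1
    ring
  -- rewrite LHS as a double sum
  have h1 : (∑ l ∈ Finset.range (n + 1), (n.choose l : ℝ) * q ^ l * modqEulerNumber q l)
      = ∑ l ∈ Finset.range (n + 1), ∑ j ∈ Finset.range (l + 1),
          (1 + q) * ((-1) ^ j / (1 + q ^ j)) * ((n.choose l : ℝ) * (l.choose j : ℝ) * r ^ l) := by
    refine Finset.sum_congr rfl fun l _ => ?_
    simp only [modqEulerNumber, Finset.mul_sum]
    refine Finset.sum_congr rfl fun j _ => ?_
    rw [hr, mul_pow]
    ring
  -- swap the order of summation
  have h2 : (∑ l ∈ Finset.range (n + 1), ∑ j ∈ Finset.range (l + 1),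
          (1 + q) * ((-1) ^ j / (1 + q ^ j)) * ((n.choose l : ℝ) * (l.choose j : ℝ) * r ^ l))
      = ∑ j ∈ Finset.range (n + 1), ∑ l ∈ Finset.Ico j (n + 1),
          (1 + q) * ((-1) ^ j / (1 + q ^ j)) * ((n.choose l : ℝ) * (l.choose j : ℝ) * r ^ l) := by
    simp only [Finset.range_eq_Ico]
    exact (Finset.sum_Ico_Ico_comm 0 (n + 1)
      (fun j l => (1 + q) * ((-1) ^ j / (1 + q ^ j)) * ((n.choose l : ℝ) * (l.choose j : ℝ) * r ^ l))).symm
  -- compute the inner sum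
  have hinner : ∀ j ≤ n, (∑ l ∈ Finset.Ico j (n + 1), (n.choose l : ℝ) * (l.choose j : ℝ) * r ^ l)
      = (n.choose j : ℝ) * q ^ j * (1 / (1 - q)) ^ n := by
    intro j hj
    rw [Finset.sum_Ico_eq_sum_range]
    have hnj : n + 1 - j = (n - j) + 1 := by omega
    rw [hnj]
    have hterm : ∀ m ∈ Finset.range (n - j + 1),
        (n.choose (j + m) : ℝ) * ((j + m).choose j : ℝ) * r ^ (j + m)
          = (n.choose j : ℝ) * r ^ j * (((n - j).choose m : ℝ) * r ^ m) := by
      intro m hm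
      have hm' : m ≤ n - j := Finset.mem_range_succ_iff.mp hm
      have hc : n.choose (j + m) * (j + m).choose j = n.choose j * (n - j).choose m := by
        have := Nat.choose_mul (n := n) (k := j + m) (s := j) (by omega)
        simpa using this
      have hc' : (n.choose (j + m) : ℝ) * ((j + m).choose j : ℝ)
          = (n.choose j : ℝ) * ((n - j).choose m : ℝ) := by exact_mod_cast hc
      rw [pow_add, hc']
      ring
    rw [Finset.sum_congr rfl hterm, ← Finset.mul_sum]
    have hsum : (∑ m ∈ Finset.range (n - j + 1), ((n - j).choose m : ℝ) * r ^ m)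
        = (1 / (1 - q)) ^ (n - j) := by
      rw [← hr1, add_pow]
      refine Finset.sum_congr rfl fun m _ => ?_
      rw [one_pow]
      ring
    rw [hsum]
    have hpow : r ^ j * (1 / (1 - q)) ^ (n - j) = q ^ j * (1 / (1 - q)) ^ n := by
      rw [hr, mul_pow, mul_assoc, ← pow_add]
      congr 2
      omega
    rw [mul_assoc, hpow, ← mul_assoc]
  rw [h1, h2, Finset.mul_sum]
  refine Finset.sum_congr rfl fun j hj => ?_
  rw [← Finset.mul_sum, hinner j (Finset.mem_range_succ_iff.mp hj)]
  ring

/-- `𝓔_{0,q} = [2]_q/2`, `(q𝓔+1)^n + 𝓔_{n,q} = 0` for `n ≥ 1`, and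
`(q𝓔+1)^0 + 𝓔_{0,q} = [2]_q`. -/
theorem modqEulerNumber_recurrence (q : ℝ) (hq0 : 0 < q) (hq1 : q ≠ 1) :
    modqEulerNumber q 0 = (1 + q) / 2 ∧
    (∀ n : ℕ, 1 ≤ n →
      (∑ l ∈ Finset.range (n + 1), (n.choose l : ℝ) * q ^ l * modqEulerNumber q l)
        + modqEulerNumber q n = 0) ∧
    (∑ l ∈ Finset.range (0 + 1), ((0 : ℕ).choose l : ℝ) * q ^ l * modqEulerNumber q l)
      + modqEulerNumber q 0 = 1 + q := by
  refine ⟨modqEulerNumber_zero q, fun n hn => ?_, ?_⟩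
  · have hpos : ∀ j : ℕ, (0 : ℝ) < 1 + q ^ j := fun j => by positivity
    rw [modqEuler_key q hq0 hq1 n, modqEulerNumber, ← mul_add, ← Finset.sum_add_distrib]
    have halt : (∑ i ∈ Finset.range (n + 1), (-1 : ℤ) ^ i * (n.choose i : ℤ)) = 0 :=
      Int.alternating_sum_range_choose_of_ne (by omega)
    have haltR : (∑ i ∈ Finset.range (n + 1), (-1 : ℝ) ^ i * (n.choose i : ℝ)) = 0 := by
      exact_mod_cast congrArg (Int.cast : ℤ → ℝ) halt
    have hterm : ∀ j ∈ Finset.range (n + 1),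
        (n.choose j : ℝ) * (-1) ^ j * q ^ j / (1 + q ^ j)
          + (n.choose j : ℝ) * (-1) ^ j / (1 + q ^ j)
          = (-1 : ℝ) ^ j * (n.choose j : ℝ) := by
      intro j _
      have h := (hpos j).ne'
      field_simp
      ring
    rw [Finset.sum_congr rfl hterm, haltR, mul_zero]
  · simp [modqEulerNumber_zero q]
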